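/- Let C⁰ and C¹ be two point configurations, each with exactly 2R points in [-R, R], and let C^h be the configuration whose ordered points are the midpoints of the corresponding ordered points of C⁰ and C¹. Then for every r ∈ [-R, R], |Discr_{[-R,r]}(C^h)| ≤ max(|Discr_{[-R,r]}(C⁰)|, |Discr_{[-R,r]}(C¹)|). -/

import Mathlib

lemma mem_filter_iff_lt_card {n : ℕ} (f : Fin n → ℝ) (hf : Monotone f) (r : ℝ) (i : Fin n) :
    i ∈ Finset.univ.filter (fun j => f j ≤ r) ↔
      i.val < (Finset.univ.filter (fun j => f j ≤ r)).card := by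
  set S := Finset.univ.filter (fun j => f j ≤ r) with hS
  constructor
  · intro hi
    have hsub : Finset.Iic i ⊆ S := by
      intro j hj
      rw [hS, Finset.mem_filter]
      exact ⟨Finset.mem_univ _, le_trans (hf (Finset.mem_Iic.mp hj))
        ((Finset.mem_filter.mp hi).2)⟩
    have := Finset.card_le_card hsub
    rw [Fin.card_Iic] at this
    omega
  · intro hi
    by_contra hni
    have hsub : S ⊆ Finset.Iio i := by
      intro j hj
      rw [Finset.mem_Iio]
      by_contra hji
      push_neg at hji
      exact hni (Finset.mem_filter.mpr ⟨Finset.mem_univ _,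
        le_trans (hf hji) (Finset.mem_filter.mp hj).2⟩)
    have := Finset.card_le_card hsub
    rw [Fin.card_Iio] at this
    omega

theorem discrepancy_of_midpoint_interpolation
    (R : ℕ) (hR : 0 < R) (z0 z1 : Fin (2 * R) → ℝ)
    (h0 : Monotone z0) (h1 : Monotone z1)
    (hz0 : ∀ i, z0 i ∈ Set.Icc (-(R : ℝ)) R)
    (hz1 : ∀ i, z1 i ∈ Set.Icc (-(R : ℝ)) R)
    (r : ℝ) (hr : r ∈ Set.Icc (-(R : ℝ)) R) :
    |((Finset.univ.filter (fun i => (z0 i + z1 i) / 2 ≤ r)).card : ℝ) - (r + R)| ≤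
      max |((Finset.univ.filter (fun i => z0 i ≤ r)).card : ℝ) - (r + R)|
          |((Finset.univ.filter (fun i => z1 i ≤ r)).card : ℝ) - (r + R)| := by
  set a := (Finset.univ.filter (fun i => z0 i ≤ r)).card with ha
  set b := (Finset.univ.filter (fun i => z1 i ≤ r)).card with hb
  set m := (Finset.univ.filter (fun i => (z0 i + z1 i) / 2 ≤ r)).card with hm
  have hmono : Monotone (fun i => (z0 i + z1 i) / 2) := by
    intro i j hij
    have := h0 hij
    have := h1 hij
    dsimp only
    linarith
  have han : a ≤ 2 * R := le_trans (Finset.card_le_card (Finset.filter_subset _ _))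
    (by simp)
  have hbn : b ≤ 2 * R := le_trans (Finset.card_le_card (Finset.filter_subset _ _))
    (by simp)
  have hmn : m ≤ 2 * R := le_trans (Finset.card_le_card (Finset.filter_subset _ _))
    (by simp)
  -- min a b ≤ m
  have hlow : min a b ≤ m := by
    by_contra h
    push_neg at h
    have hmlt : m < 2 * R := lt_of_lt_of_le h (le_trans (min_le_left _ _) han)
    set i : Fin (2 * R) := ⟨m, hmlt⟩ with hi
    have hia : (i : ℕ) < a := lt_of_lt_of_le h (min_le_left _ _)
    have hib : (i : ℕ) < b := lt_of_lt_of_le h (min_le_right _ _)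
    have h0i : z0 i ≤ r := (Finset.mem_filter.mp
      ((mem_filter_iff_lt_card z0 h0 r i).mpr hia)).2
    have h1i : z1 i ≤ r := (Finset.mem_filter.mp
      ((mem_filter_iff_lt_card z1 h1 r i).mpr hib)).2
    have : (i : ℕ) < m := (mem_filter_iff_lt_card _ hmono r i).mp
      (Finset.mem_filter.mpr ⟨Finset.mem_univ _, by linarith⟩)
    simp [hi] at this
  -- m ≤ max a b
  have hhigh : m ≤ max a b := by
    by_contra h
    push_neg at h
    have hlt : max a b < 2 * R := lt_of_lt_of_le h hmn
    set i : Fin (2 * R) := ⟨max a b, hlt⟩ with hi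
    have him : (i : ℕ) < m := h
    have hmid : (z0 i + z1 i) / 2 ≤ r := (Finset.mem_filter.mp
      ((mem_filter_iff_lt_card _ hmono r i).mpr him)).2
    have h0i : ¬ z0 i ≤ r := fun hc => by
      have := (mem_filter_iff_lt_card z0 h0 r i).mp
        (Finset.mem_filter.mpr ⟨Finset.mem_univ _, hc⟩)
      simp [hi] at this
      exact absurd this.1 (lt_irrefl _)
    have h1i : ¬ z1 i ≤ r := fun hc => by
      have := (mem_filter_iff_lt_card z1 h1 r i).mp
        (Finset.mem_filter.mpr ⟨Finset.mem_univ _, hc⟩)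
      simp [hi] at this
      exact absurd this.2 (lt_irrefl _)
    push_neg at h0i h1i
    linarith
  -- arithmetic
  have h1a : (r + R) - a ≤ |(a : ℝ) - (r + R)| := by
    rw [abs_sub_comm]; exact le_abs_self _
  have h2a : (a : ℝ) - (r + R) ≤ |(a : ℝ) - (r + R)| := le_abs_self _
  have h1b : (r + R) - b ≤ |(b : ℝ) - (r + R)| := by
    rw [abs_sub_comm]; exact le_abs_self _
  have h2b : (b : ℝ) - (r + R) ≤ |(b : ℝ) - (r + R)| := le_abs_self _
  have hma : |(a : ℝ) - (r + R)| ≤ max |(a : ℝ) - (r + R)| |(b : ℝ) - (r + R)| :=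
    le_max_left _ _
  have hmb : |(b : ℝ) - (r + R)| ≤ max |(a : ℝ) - (r + R)| |(b : ℝ) - (r + R)| :=
    le_max_right _ _
  rcases le_total a b with hab | hab
  · have l1 : (a : ℝ) ≤ m := by exact_mod_cast (min_eq_left hab ▸ hlow)
    have l2 : (m : ℝ) ≤ b := by exact_mod_cast (max_eq_right hab ▸ hhigh)
    rcases abs_cases ((m : ℝ) - (r + R)) with ⟨heq, _⟩ | ⟨heq, _⟩ <;> rw [heq] <;> linarith
  · have l1 : (b : ℝ) ≤ m := by exact_mod_cast (min_eq_right hab ▸ hlow)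
    have l2 : (m : ℝ) ≤ a := by exact_mod_cast (max_eq_left hab ▸ hhigh)
    rcases abs_cases ((m : ℝ) - (r + R)) with ⟨heq, _⟩ | ⟨heq, _⟩ <;> rw [heq] <;> linarith
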